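/- If u, v, w are three vertices of a tree T with {u,v} and {v,w} edges of T, then 2·f_T(v) − f_T(u) − f_T(w) > 0, where f_T(x) denotes the number of subtrees of T containing x. -/

import Mathlib

open SimpleGraph Finset

private lemma singleton_conn {V : Type*} (G : SimpleGraph V) (b : V) :
    (G.induce ({b} : Set V)).Connected := by
  haveI : Nonempty (({b} : Set V)) := ⟨⟨b, rfl⟩⟩
  apply Connected.mk
  rintro ⟨x, hx⟩ ⟨y, hy⟩
  simp only [Set.mem_singleton_iff] at hx hy
  subst hx; subst hy
  rfl

private lemma insert_conn {V : Type*} [DecidableEq V] (G : SimpleGraph V) {S : Finset V} {a b : V}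
    (ha : a ∈ S) (hab : G.Adj b a) (h : (G.induce (S : Set V)).Connected) :
    (G.induce ((insert b S : Finset V) : Set V)).Connected := by
  rw [Finset.coe_insert, Set.insert_eq]
  exact connected_induce_union (singleton_conn G b).preconnected h.preconnected rfl ha hab

/-- Separation: in a tree with edges `u-v` and `v-w` (`u ≠ w`), a connected induced subgraph
containing `w` but not `v` avoids `u`. -/
private lemma sep {V : Type*} (G : SimpleGraph V) (hT : G.IsTree) {u v w : V}
    (huw : u ≠ w) (huv : G.Adj u v) (hvw : G.Adj v w) {S : Finset V}
    (hconn : (G.induce (S : Set V)).Connected) (hw : w ∈ S) (hv : v ∉ S) : u ∉ S := by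
  classical
  intro hu
  rw [connected_induce_iff, Subgraph.connected_iff_forall_exists_walk_subgraph] at hconn
  obtain ⟨p, hp⟩ := hconn.2 (u := u) (v := w) (by simpa using hu) (by simpa using hw)
  have hsupp : ∀ x ∈ p.support, x ∈ (S : Set V) := by
    intro x hx
    have := hp.1
    simp only [Walk.verts_toSubgraph, Subgraph.induce_verts] at this
    exact this hx
  have hq2 : (Walk.cons huv (Walk.cons hvw Walk.nil)).IsPath := by
    simp [Walk.isPath_def, huv.ne, hvw.ne, huw]
  have heq := hT.IsAcyclic.path_unique p.toPath ⟨_, hq2⟩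
  have hv2 : v ∈ p.toPath.1.support := by rw [heq]; simp
  have : v ∈ (S : Set V) := hsupp v (Walk.support_toPath_subset p hv2)
  exact hv (by simpa using this)

/-- `numSubtrees G x` is the number of subtrees (nonempty connected subgraphs, identified with
their vertex sets) of the tree `G` containing the vertex `x`. -/
noncomputable def numSubtrees {V : Type*} (G : SimpleGraph V) (x : V) : ℕ :=
  {S : Finset V | x ∈ S ∧ (G.induce (S : Set V)).Connected}.ncard

private lemma split_count {V : Type*} [Fintype V] (G : SimpleGraph V) (x y : V) :
    numSubtrees G x =
      {S : Finset V | x ∈ S ∧ y ∈ S ∧ (G.induce (S : Set V)).Connected}.ncard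
      + {S : Finset V | x ∈ S ∧ y ∉ S ∧ (G.induce (S : Set V)).Connected}.ncard := by
  rw [numSubtrees, ← Set.ncard_union_eq ?_ (Set.toFinite _) (Set.toFinite _)]
  · congr 1
    ext S
    simp only [Set.mem_setOf_eq, Set.mem_union]
    tauto
  · rw [Set.disjoint_left]
    rintro S ⟨-, hy, -⟩ ⟨-, hy', -⟩
    exact hy' hy

private lemma half_count {V : Type*} [Fintype V] (G : SimpleGraph V) (hT : G.IsTree)
    {u v w : V} (huw : u ≠ w) (huv : G.Adj u v) (hvw : G.Adj v w) :
    {S : Finset V | u ∈ S ∧ v ∈ S ∧ (G.induce (S : Set V)).Connected}.ncard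
      + {S : Finset V | w ∈ S ∧ v ∉ S ∧ (G.induce (S : Set V)).Connected}.ncard
      < numSubtrees G v := by
  classical
  set F1 : Set (Finset V) :=
    {S : Finset V | u ∈ S ∧ v ∈ S ∧ (G.induce (S : Set V)).Connected} with hF1
  set Aw : Set (Finset V) :=
    {S : Finset V | w ∈ S ∧ v ∉ S ∧ (G.induce (S : Set V)).Connected} with hAw
  set F2 : Set (Finset V) := (fun S => insert v S) '' Aw with hF2
  -- image cardinality
  have hinj : Set.InjOn (fun S => insert v S) Aw := by
    intro S1 h1 S2 h2 h
    have := congrArg (fun T => Finset.erase T v) h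
    simpa [Finset.erase_insert h1.2.1, Finset.erase_insert h2.2.1] using this
  have hcard2 : F2.ncard = Aw.ncard := Set.ncard_image_of_injOn hinj
  -- elements of F2 avoid u
  have hF2u : ∀ T ∈ F2, u ∉ T := by
    rintro T ⟨S, hS, rfl⟩
    have hu : u ∉ S := sep G hT huw huv hvw hS.2.2 hS.1 hS.2.1
    simp only [Finset.mem_insert, not_or]
    exact ⟨huv.ne, hu⟩
  -- subset of the subtrees containing v
  have hsub : insert ({v} : Finset V) (F1 ∪ F2) ⊆
      {S : Finset V | v ∈ S ∧ (G.induce (S : Set V)).Connected} := by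
    rintro T (rfl | hT')
    · exact ⟨Finset.mem_singleton_self v,
        by rw [Finset.coe_singleton]; exact singleton_conn G v⟩
    · rcases hT' with h1 | h2
      · exact ⟨h1.2.1, h1.2.2⟩
      · obtain ⟨S, hS, rfl⟩ := h2
        exact ⟨Finset.mem_insert_self v S, insert_conn G hS.1 hvw hS.2.2⟩
  have hvnot : ({v} : Finset V) ∉ F1 ∪ F2 := by
    rintro (h1 | h2)
    · exact huv.ne (Finset.mem_singleton.mp h1.1)
    · obtain ⟨S, hS, hEq⟩ := h2
      have : w ∈ ({v} : Finset V) := hEq ▸ Finset.mem_insert_of_mem hS.1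
      exact hvw.ne' (Finset.mem_singleton.mp this)
  have hdisj : Disjoint F1 F2 := by
    rw [Set.disjoint_left]
    intro T h1 h2
    exact hF2u T h2 h1.1
  calc F1.ncard + Aw.ncard < F1.ncard + F2.ncard + 1 := by rw [hcard2]; omega
    _ = (F1 ∪ F2).ncard + 1 := by
        rw [Set.ncard_union_eq hdisj (Set.toFinite _) (Set.toFinite _)]
    _ = (insert ({v} : Finset V) (F1 ∪ F2)).ncard := by
        rw [Set.ncard_insert_of_notMem hvnot (Set.toFinite _)]
    _ ≤ numSubtrees G v := Set.ncard_le_ncard hsub (Set.toFinite _)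

/-- If `u, v, w` are three vertices of a tree `T` with `{u,v}` and `{v,w}` edges of `T`, then
`2·f_T(v) − f_T(u) − f_T(w) > 0`. -/
theorem subtree_count_strictly_concave {V : Type*} [Fintype V] (G : SimpleGraph V)
    (hT : G.IsTree) {u v w : V} (huw : u ≠ w) (huv : G.Adj u v) (hvw : G.Adj v w) :
    numSubtrees G u + numSubtrees G w < 2 * numSubtrees G v := by
  have h1 := half_count G hT huw huv hvw
  have h2 := half_count G hT huw.symm hvw.symm huv.symm
  rw [split_count G u v, split_count G w v]
  omega
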